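/- Let L be a finite-dimensional Lie algebra over any field F, and let P be the intersection of all maximal subalgebras M of L with L = M + Ñ(L). Then the core P_L of P (the largest ideal of L contained in P) equals φ(L). -/

import Mathlib

namespace Paper

open LieAlgebra

section AlgDefs

variable (F : Type*) [Field F] (L : Type*) [LieRing L] [LieAlgebra F L]

/-- The nilradical of a Lie algebra: the largest nilpotent ideal (the sup of nilpotent ideals). -/
noncomputable def nilrad : LieIdeal F L :=
  sSup {I : LieIdeal F L | LieModule.IsNilpotent I I}

/-- The nilpotency class of a Lie algebra. -/
noncomputable def nilClass (F : Type*) [Field F] (L : Type*) [LieRing L] [LieAlgebra F L] : ℕ := LieModule.nilpotencyLength L L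

/-- A Lie algebra is nilregular if the field has characteristic zero, or characteristic `p > 0`
and its nilradical has nilpotency class less than `p - 1`. -/
noncomputable def Nilregular : Prop :=
  ringChar F = 0 ∨ nilClass F (nilrad F L) < ringChar F - 1

/-- A Lie algebra is solregular if the field has characteristic zero, or characteristic `p > 0`
and its radical has derived length less than `log₂ p`. -/
noncomputable def Solregular : Prop :=
  ringChar F = 0 ∨ 2 ^ LieAlgebra.derivedLength F (LieAlgebra.radical F L) < ringChar F

/-- Regular means nilregular or solregular. -/
noncomputable def Regular : Prop := Nilregular F L ∨ Solregular F L

end AlgDefs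

section IdealDefs

variable {F : Type*} [Field F] {L : Type*} [LieRing L] [LieAlgebra F L]

/-- The centraliser `C_L(I)` of an ideal `I`, as an ideal of `L`. -/
def centralizer (I : LieIdeal F L) : LieIdeal F L where
  carrier := {x : L | ∀ y ∈ I, ⁅x, y⁆ = 0}
  zero_mem' := by intro y hy; simp
  add_mem' := by intro a b ha hb y hy; rw [add_lie, ha y hy, hb y hy, add_zero]
  smul_mem' := by intro c x hx y hy; rw [smul_lie, hx y hy, smul_zero]
  lie_mem := by
    intro x m hm y hy
    have h1 : ⁅x, ⁅m, y⁆⁆ = (0 : L) := by rw [hm y hy, lie_zero]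
    have h2 : ⁅m, ⁅x, y⁆⁆ = (0 : L) := hm _ (I.lie_mem hy)
    show ⁅⁅x, m⁆, y⁆ = (0 : L)
    rw [lie_lie, h1, h2, sub_zero]

/-- The centre `Z(I)` of an ideal `I`, as an ideal of `L`. -/
def idealCenter (I : LieIdeal F L) : LieIdeal F L where
  carrier := {x : L | x ∈ I ∧ ∀ y ∈ I, ⁅x, y⁆ = 0}
  zero_mem' := ⟨I.zero_mem, by intro y hy; simp⟩
  add_mem' := by
    intro a b ha hb
    exact ⟨I.add_mem ha.1 hb.1, fun y hy => by rw [add_lie, ha.2 y hy, hb.2 y hy, add_zero]⟩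
  smul_mem' := by
    intro c x hx
    exact ⟨I.smul_mem c hx.1, fun y hy => by rw [smul_lie, hx.2 y hy, smul_zero]⟩
  lie_mem := by
    intro x m hm
    refine ⟨I.lie_mem hm.1, fun y hy => ?_⟩
    have h1 : ⁅x, ⁅m, y⁆⁆ = (0 : L) := by rw [hm.2 y hy, lie_zero]
    have h2 : ⁅m, ⁅x, y⁆⁆ = (0 : L) := hm.2 _ (I.lie_mem hy)
    show ⁅⁅x, m⁆, y⁆ = (0 : L)
    rw [lie_lie, h1, h2, sub_zero]

/-- The centraliser `C_L(A/B)` of a chief factor, as an ideal of `L`. -/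
def chiefCentralizer (A B : LieIdeal F L) : LieIdeal F L where
  carrier := {x : L | ∀ a ∈ A, ⁅x, a⁆ ∈ B}
  zero_mem' := by intro a ha; simp [B.zero_mem]
  add_mem' := by intro x y hx hy a ha; rw [add_lie]; exact B.add_mem (hx a ha) (hy a ha)
  smul_mem' := by intro c x hx a ha; rw [smul_lie]; exact B.smul_mem c (hx a ha)
  lie_mem := by
    intro x m hm a ha
    show ⁅⁅x, m⁆, a⁆ ∈ B
    rw [lie_lie]
    exact B.sub_mem (B.lie_mem (hm a ha)) (hm _ (A.lie_mem ha))

/-- `A/Z` is a minimal ideal of `L/Z` (via the ideal correspondence). -/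
def IsMinModIdeal (Z A : LieIdeal F L) : Prop :=
  Z < A ∧ ∀ B : LieIdeal F L, Z ≤ B → B ≤ A → B = Z ∨ B = A

/-- `A` is a minimal ideal of `L`. -/
def IsMinimalIdeal (A : LieIdeal F L) : Prop := IsMinModIdeal ⊥ A

/-- An ideal `A` of `L` is quasi-minimal if `A² = A` and `A/Z(A)` is a minimal ideal
of `L/Z(A)`. -/
def IsQuasiMinimal (A : LieIdeal F L) : Prop :=
  ⁅A, A⁆ = A ∧ IsMinModIdeal (idealCenter A) A

end IdealDefs

section MoreDefs

variable (F : Type*) [Field F] (L : Type*) [LieRing L] [LieAlgebra F L]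

/-- `E†(L)`: the subalgebra generated by the quasi-minimal components of `L`. -/
noncomputable def Edagger : LieSubalgebra F L :=
  LieSubalgebra.lieSpan F L (⋃ A ∈ {A : LieIdeal F L | IsQuasiMinimal A}, (A : Set L))

/-- `N†(L) = N(L) + E†(L)`: the quasi-minimal radical of `L`. -/
noncomputable def Ndagger : LieSubalgebra F L :=
  LieIdeal.toLieSubalgebra F L (nilrad F L) ⊔ Edagger F L

/-- The generalised nilradical `N*(L)`: the ideal containing `N = N(L)` with
`N*(L)/N` the sum of all minimal ideals of `L/N` contained in `(N + C_L(N))/N`. -/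
noncomputable def Nstar : LieIdeal F L :=
  nilrad F L ⊔ sSup {A : LieIdeal F L | IsMinModIdeal (nilrad F L) A ∧
    A ≤ nilrad F L ⊔ centralizer (nilrad F L)}

/-- The Frattini ideal: the largest ideal contained in every maximal subalgebra. -/
def frattini : LieIdeal F L :=
  sSup {I : LieIdeal F L | ∀ M : LieSubalgebra F L, IsCoatom M → (I : Set L) ⊆ M}

/-- `Ñ(L)`: the ideal with `Ñ(L)/φ(L) = Soc (L/φ(L))`. -/
noncomputable def Ntilde : LieIdeal F L :=
  frattini F L ⊔ sSup {A : LieIdeal F L | IsMinModIdeal (frattini F L) A}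

/-- A characteristic ideal: one invariant under all derivations. -/
def IsCharIdeal (J : LieIdeal F L) : Prop :=
  ∀ D : LieDerivation F L L, ∀ x ∈ J, D x ∈ J

/-- The characteristic radical `R_c(L)`: the sum of all solvable characteristic ideals. -/
noncomputable def charRadical : LieIdeal F L :=
  sSup {J : LieIdeal F L | LieAlgebra.IsSolvable J ∧ IsCharIdeal F L J}

/-- A subideal: a subalgebra joined to `L` by a chain of successive ideals. -/
def IsSubideal (S : LieSubalgebra F L) : Prop :=
  ∃ n : ℕ, ∃ c : Fin (n + 1) → LieSubalgebra F L,
    c 0 = S ∧ c (Fin.last n) = ⊤ ∧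
    ∀ i : Fin n, c i.castSucc ≤ c i.succ ∧
      ∀ x ∈ c i.succ, ∀ y ∈ c i.castSucc, ⁅x, y⁆ ∈ c i.castSucc

end MoreDefs

section Aux

variable {F : Type*} [Field F] {L : Type*} [LieRing L] [LieAlgebra F L]

/-- The Frattini ideal is contained in every maximal subalgebra. -/
lemma frattini_le_coatom (M : LieSubalgebra F L) (hM : IsCoatom M) :
    ((frattini F L : LieIdeal F L) : Set L) ⊆ M := by
  intro x hx
  have h : (frattini F L).toSubmodule ≤ M.toSubmodule := by
    rw [frattini, LieSubmodule.sSup_toSubmodule]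
    apply sSup_le
    rintro p ⟨I, hI, rfl⟩
    intro y hy
    exact hI M hM hy
  exact h hx

/-- Any ideal contained in the intersection of all maximal subalgebras supplementing
`Ñ(L)` is contained in the Frattini ideal. -/
lemma ideal_le_frattini [FiniteDimensional F L] (K : LieIdeal F L)
    (hK : (K : Set L) ⊆
        ((sInf {M : LieSubalgebra F L | IsCoatom M ∧
            M.toSubmodule ⊔ ((Ntilde F L).toSubmodule) = ⊤} : LieSubalgebra F L) : Set L)) :
    K ≤ frattini F L := by
  by_contra hKφ
  set φ := frattini F L with hφdef
  set T : Set (LieIdeal F L) := {A | φ < A ∧ A ≤ φ ⊔ K} with hTdef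
  have hTne : (φ ⊔ K) ∈ T :=
    ⟨lt_of_le_of_ne le_sup_left (fun h => hKφ (le_sup_right.trans h.ge)), le_rfl⟩
  set rk : LieIdeal F L → ℕ := fun A => Module.finrank F A.toSubmodule with hrkdef
  have hne : (rk '' T).Nonempty := ⟨rk (φ ⊔ K), ⟨φ ⊔ K, hTne, rfl⟩⟩
  obtain ⟨A, hAT, hAn⟩ := Nat.sInf_mem hne
  -- A is a minimal ideal mod φ
  have hmin : IsMinModIdeal φ A := by
    refine ⟨hAT.1, fun B hφB hBA => ?_⟩
    by_cases hB : B = φ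
    · exact Or.inl hB
    right
    have hBT : B ∈ T := ⟨lt_of_le_of_ne hφB (Ne.symm hB), hBA.trans hAT.2⟩
    have h1 : rk A ≤ rk B := by
      rw [hAn]
      exact Nat.sInf_le ⟨B, hBT, rfl⟩
    have h2 : B.toSubmodule = A.toSubmodule :=
      Submodule.eq_of_le_of_finrank_le hBA h1
    exact (LieSubmodule.toSubmodule_inj _ _).mp h2
  have hAN : A ≤ Ntilde F L := by
    rw [Ntilde]
    have hmem : A ∈ {B : LieIdeal F L | IsMinModIdeal (frattini F L) B} := hmin
    exact (le_sSup hmem).trans le_sup_right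
  -- there is a maximal subalgebra not containing A
  have hAM : ∃ M : LieSubalgebra F L, IsCoatom M ∧ ¬ (A : Set L) ⊆ M := by
    by_contra h
    push_neg at h
    have hAφ : A ≤ φ := le_sSup (fun M hM => h M hM)
    exact hAT.1.not_ge hAφ
  obtain ⟨M, hMco, hAnM⟩ := hAM
  -- `M + A` is a subalgebra
  let S : LieSubalgebra F L :=
    { M.toSubmodule ⊔ A.toSubmodule with
      lie_mem' := by
        intro x y hx hy
        obtain ⟨m, hm, a, ha, rfl⟩ := Submodule.mem_sup.mp hx
        obtain ⟨m', hm', a', ha', rfl⟩ := Submodule.mem_sup.mp hy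
        have heq : ⁅m + a, m' + a'⁆
            = ⁅m, m'⁆ + (⁅m, a'⁆ + (-⁅m', a⁆ + ⁅a, a'⁆)) := by
          rw [add_lie, lie_add, lie_add, ← lie_skew a m']
          abel
        show ⁅m + a, m' + a'⁆ ∈ M.toSubmodule ⊔ A.toSubmodule
        rw [heq]
        refine Submodule.mem_sup.mpr ⟨⁅m, m'⁆, M.lie_mem hm hm',
          ⁅m, a'⁆ + (-⁅m', a⁆ + ⁅a, a'⁆), ?_, rfl⟩
        exact A.add_mem (A.lie_mem ha')
          (A.add_mem (A.toSubmodule.neg_mem (A.lie_mem ha)) (A.lie_mem ha')) }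
  have hMS : M ≤ S := fun x hx => Submodule.mem_sup_left hx
  obtain ⟨a, haA, hanM⟩ : ∃ a : L, a ∈ A ∧ a ∉ M := by
    simpa [Set.subset_def] using hAnM
  have hMlt : M < S := hMS.lt_of_ne (by
    intro h
    exact hanM (h ▸ (Submodule.mem_sup_right haA : a ∈ S)))
  have hStop : S = ⊤ := hMco.2 S hMlt
  have hsub : M.toSubmodule ⊔ A.toSubmodule = ⊤ := by
    have := congrArg LieSubalgebra.toSubmodule hStop
    exact this.trans LieSubalgebra.top_toSubmodule
  have hMmem : M ∈ {M : LieSubalgebra F L | IsCoatom M ∧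
      M.toSubmodule ⊔ ((Ntilde F L).toSubmodule) = ⊤} := by
    refine ⟨hMco, ?_⟩
    rw [eq_top_iff, ← hsub]
    exact sup_le_sup_left ((LieSubmodule.toSubmodule_le_toSubmodule _ _).mpr hAN) _
  have hKM : (K : Set L) ⊆ M := fun x hx => (sInf_le hMmem) (hK hx)
  have hφM := frattini_le_coatom M hMco
  have hAMsub : (A : Set L) ⊆ M := by
    intro x hx
    have hx' : x ∈ φ.toSubmodule ⊔ K.toSubmodule := by
      rw [← LieSubmodule.sup_toSubmodule]
      exact hAT.2 hx
    obtain ⟨y, hy, z, hz, rfl⟩ := Submodule.mem_sup.mp hx'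
    exact M.add_mem (hφM hy) (hKM hz)
  exact hAnM hAMsub

end Aux

/-- The core of the intersection of all maximal subalgebras `M` with `L = M + Ñ(L)`
equals `φ(L)`. -/
theorem stmt_19 (F : Type*) [Field F] (L : Type*) [LieRing L] [LieAlgebra F L]
    [FiniteDimensional F L] :
    sSup {I : LieIdeal F L | (I : Set L) ⊆
        ((sInf {M : LieSubalgebra F L | IsCoatom M ∧
            M.toSubmodule ⊔ ((Ntilde F L).toSubmodule) = ⊤} : LieSubalgebra F L) : Set L)}
      = frattini F L := by
  apply le_antisymm
  · exact sSup_le fun I hI => ideal_le_frattini I hI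
  · apply le_sSup
    intro x hx
    show x ∈ ((sInf {M : LieSubalgebra F L | IsCoatom M ∧
        M.toSubmodule ⊔ ((Ntilde F L).toSubmodule) = ⊤} : LieSubalgebra F L) : Set L)
    rw [LieSubalgebra.coe_sInf]
    simp only [Set.mem_iInter]
    intro M hM
    exact frattini_le_coatom M hM.1 hx

end Paper
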